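/- Every HGT-free reconciliation is time-consistent: if (T,S,μ) is a reconciliation in which μ(x) and μ(y) are ⪯_S-comparable for every edge xy ∈ E(T), then there exist time maps τ_T for T and τ_S for S such that (T,S,μ,τ_T,τ_S) is a relaxed scenario. -/

import Mathlib

/-- A planted phylogenetic rooted tree, encoded by a parent function on a
finite vertex set.  The root `0_T` is a fixed point of `parent`; every vertex
reaches the root by iterating `parent`; the root has exactly one child
(`planted`); and every inner vertex (non-root vertex having a child) has at
least two children (`phylo`). -/
structure PPTree where
  V : Type
  [fintypeV : Fintype V]
  [decEqV : DecidableEq V]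
  root : V
  parent : V → V
  parent_root : parent root = root
  reach : ∀ v : V, ∃ n : ℕ, parent^[n] v = root
  planted : ∃! v : V, v ≠ root ∧ parent v = root
  phylo : ∀ v : V, v ≠ root → (∃ u, parent u = v ∧ u ≠ v) →
      ∃ u w, parent u = v ∧ parent w = v ∧ u ≠ w ∧ u ≠ v ∧ w ≠ v

attribute [instance] PPTree.fintypeV PPTree.decEqV

namespace PPTree

variable (T : PPTree)

/-- `T.le x y` means `x ⪯_T y`, i.e. `y` is an ancestor of `x` (or `x = y`). -/
def le (x y : T.V) : Prop := ∃ n : ℕ, T.parent^[n] x = y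

/-- `T.lt x y` means `x ≺_T y`. -/
def lt (x y : T.V) : Prop := T.le x y ∧ x ≠ y

/-- Leaves are the `⪯_T`-minimal vertices, i.e. vertices without children. -/
def isLeaf (v : T.V) : Prop := ∀ u, T.parent u = v → u = v

/-- Inner vertices: neither leaves nor the planted root. -/
def inner (v : T.V) : Prop := v ≠ T.root ∧ ¬ T.isLeaf v

/-- The last common ancestor of two vertices: the `⪯_T`-minimal common
ancestor. -/
noncomputable def lca (x y : T.V) : T.V :=
  @Classical.epsilon _ ⟨T.root⟩
    fun v => T.le x v ∧ T.le y v ∧ ∀ w, T.le x w → T.le y w → T.le v w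

/-- The last common ancestor of a set of vertices. -/
noncomputable def lcaSet (A : Set T.V) : T.V :=
  @Classical.epsilon _ ⟨T.root⟩
    fun v => (∀ a ∈ A, T.le a v) ∧ ∀ w, (∀ a ∈ A, T.le a w) → T.le v w

/-- `ρ_T`, the unique child of the planted root. -/
noncomputable def rho : T.V := T.planted.choose

theorem rho_ne_root : T.rho ≠ T.root := T.planted.choose_spec.1.1

/-- Edges of `T`, identified with their child endpoint: the vertex `v ≠ 0_T`
represents the edge `(parent v, v)`. -/
abbrev Edge := {v : T.V // v ≠ T.root}

/-- The union `V(T) ∪ E(T)`. -/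
abbrev VE := T.V ⊕ T.Edge

/-- The ancestor order `⪯_T` extended to `V(T) ∪ E(T)`: for an edge `e = uv`
(`u` the parent of `v`), `x ⪯ e` iff `x ⪯ v`, `e ⪯ x` iff `u ⪯ x`, and
`e ⪯ f` iff the child endpoints are comparable accordingly. -/
def leVE : T.VE → T.VE → Prop
  | Sum.inl x, Sum.inl y => T.le x y
  | Sum.inl x, Sum.inr e => T.le x e.1
  | Sum.inr e, Sum.inl y => T.le (T.parent e.1) y
  | Sum.inr e, Sum.inr f => T.le e.1 f.1

def ltVE (a b : T.VE) : Prop := T.leVE a b ∧ a ≠ b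

/-- Two elements of `V(T) ∪ E(T)` are comparable. -/
def cmpVE (a b : T.VE) : Prop := T.leVE a b ∨ T.leVE b a

/-- Membership in `L(T)` for elements of `V(T) ∪ E(T)`. -/
def isLeafVE : T.VE → Prop
  | Sum.inl v => T.isLeaf v
  | Sum.inr _ => False

/-- Map an element of `V(T) ∪ E(T)` to a vertex (an edge `uv` is sent to its
child endpoint `v`). -/
def toVertex : T.VE → T.V
  | Sum.inl v => v
  | Sum.inr e => e.1

end PPTree

/-- Axioms (R0)–(R3) of a reconciliation map `μ : V(T) → V(S) ∪ E(S)`. -/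
structure IsRecon (T S : PPTree) (μ : T.V → S.VE) : Prop where
  R0 : ∀ x, μ x = Sum.inl S.root ↔ x = T.root
  R1 : ∀ x, S.isLeafVE (μ x) ↔ T.isLeaf x
  R2 : ∀ x y, T.lt y x → (∃ u, μ x = Sum.inl u) → (∃ v, μ y = Sum.inl v) → μ x ≠ μ y
  R3 : ∀ x y, T.lt y x → ¬ S.ltVE (μ x) (μ y)

/-- A reconciliation is HGT-free if the images of the endpoints of every edge
of `T` are `⪯_S`-comparable. -/
def IsHGTFree (T S : PPTree) (μ : T.V → S.VE) : Prop :=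
  ∀ v : T.V, v ≠ T.root → S.cmpVE (μ (T.parent v)) (μ v)

/-- `(T,S,μ,σ)` is a σ-reconciliation when `μ` restricted to `L(T)` equals
`σ`. -/
def SigmaCompat (T S : PPTree) (μ : T.V → S.VE) (σ : T.V → S.V) : Prop :=
  ∀ x, T.isLeaf x → μ x = Sum.inl (σ x)

/-- A time map for `T`. -/
def IsTimeMap (T : PPTree) (τ : T.V → ℝ) : Prop :=
  ∀ x y, T.lt x y → τ x < τ y

/-- Axioms (S0)–(S3) of a relaxed scenario `(T,S,μ,τ_T,τ_S)`. -/
structure IsRelaxedScenario (T S : PPTree) (μ : T.V → S.VE)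
    (τT : T.V → ℝ) (τS : S.V → ℝ) : Prop where
  timeT : IsTimeMap T τT
  timeS : IsTimeMap S τS
  S0 : ∀ x, μ x = Sum.inl S.root ↔ x = T.root
  S1 : ∀ x, S.isLeafVE (μ x) ↔ T.isLeaf x
  S2 : ∀ x v, μ x = Sum.inl v → τS v = τT x
  S3 : ∀ x (e : S.Edge), μ x = Sum.inr e → τS e.1 < τT x ∧ τT x < τS (S.parent e.1)

namespace PPTree
variable {T : PPTree}

lemma le_refl (x : T.V) : T.le x x := ⟨0, rfl⟩

lemma le_trans {x y z : T.V} (h1 : T.le x y) (h2 : T.le y z) : T.le x z := by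
  obtain ⟨n, hn⟩ := h1; obtain ⟨m, hm⟩ := h2
  exact ⟨m + n, by rw [Function.iterate_add_apply, hn, hm]⟩

lemma le_parent (x : T.V) : T.le x (T.parent x) := ⟨1, rfl⟩

lemma parent_ne {v : T.V} (hv : v ≠ T.root) : T.parent v ≠ v := by
  intro h
  obtain ⟨n, hn⟩ := T.reach v
  have : ∀ n, T.parent^[n] v = v := by
    intro n; induction n with
    | zero => rfl
    | succ k ih => rw [Function.iterate_succ_apply', ih, h]
  exact hv (by rw [this n] at hn; exact hn)

lemma le_parent_of_le {x y : T.V} (h : T.le (T.parent x) y) : T.le x y := by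
  obtain ⟨n, hn⟩ := h
  exact ⟨n + 1, by rwa [Function.iterate_add_apply]⟩

lemma leVE_refl (a : T.VE) : T.leVE a a := by
  cases a with
  | inl v => exact le_refl v
  | inr e => exact le_refl e.1

lemma leVE_trans {a b c : T.VE} (h1 : T.leVE a b) (h2 : T.leVE b c) :
    T.leVE a c := by
  cases a with
  | inl x =>
    cases b with
    | inl y =>
      cases c with
      | inl z => exact le_trans h1 h2
      | inr f => exact le_trans h1 h2
    | inr e =>
      cases c with
      | inl z => exact le_trans h1 (le_parent_of_le h2)
      | inr f => exact le_trans h1 h2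
  | inr e =>
    cases b with
    | inl y =>
      cases c with
      | inl z => exact le_trans h1 h2
      | inr f =>
        have : T.le (T.parent e.1) f.1 := le_trans h1 h2
        exact le_parent_of_le this
    | inr f =>
      cases c with
      | inl z =>
        obtain ⟨n, hn⟩ := (h1 : T.le e.1 f.1)
        cases n with
        | zero =>
          have : e.1 = f.1 := hn
          show T.le (T.parent e.1) z
          rw [this]; exact h2
        | succ k =>
          have hef : T.le (T.parent e.1) f.1 :=
            ⟨k, by rw [← Function.iterate_succ_apply]; exact hn⟩
          exact le_trans hef (le_parent_of_le h2)
      | inr g => exact le_trans h1 h2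

/-- depth of a vertex -/
noncomputable def dep (T : PPTree) (v : T.V) : ℕ := Nat.find (T.reach v)

lemma dep_spec (v : T.V) : T.parent^[T.dep v] v = T.root := Nat.find_spec (T.reach v)

lemma dep_eq_zero {v : T.V} (h : v = T.root) : T.dep v = 0 := by
  apply Nat.eq_zero_of_le_zero
  exact Nat.find_le (by simp [h])

lemma dep_pos {v : T.V} (h : v ≠ T.root) : 0 < T.dep v := by
  rcases Nat.eq_zero_or_pos (T.dep v) with h0 | h0
  · exact absurd (by simpa [h0] using dep_spec v) h
  · exact h0

lemma dep_parent {v : T.V} (h : v ≠ T.root) :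
    T.dep v = T.dep (T.parent v) + 1 := by
  have h1 : T.dep (T.parent v) ≤ T.dep v - 1 := by
    apply Nat.find_le
    have := dep_spec (T := T) v
    have hd := dep_pos h
    rw [show T.dep v = (T.dep v - 1) + 1 by omega] at this
    rwa [Function.iterate_add_apply, Function.iterate_one] at this
  have h2 : T.dep v ≤ T.dep (T.parent v) + 1 := by
    apply Nat.find_le
    rw [Function.iterate_add_apply, Function.iterate_one]
    exact dep_spec (T.parent v)
  have hd := dep_pos h
  omega

lemma dep_lt_of_lt : ∀ n : ℕ, ∀ x y : T.V, T.parent^[n] x = y → x ≠ y →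
    T.dep y < T.dep x := by
  intro n
  induction n with
  | zero => intro x y h hne; exact absurd h hne
  | succ k ih =>
    intro x y h hne
    have hx : x ≠ T.root := by
      rintro rfl
      apply hne
      have : ∀ m, T.parent^[m] T.root = T.root := fun m =>
        Function.iterate_fixed T.parent_root m
      rw [this] at h; exact h
    rw [Function.iterate_succ_apply] at h
    by_cases hpy : T.parent x = y
    · rw [dep_parent hx, ← hpy]; omega
    · have := ih (T.parent x) y h hpy
      rw [dep_parent hx]; omega

lemma dep_le_of_le {x y : T.V} (h : T.le x y) : T.dep y ≤ T.dep x := by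
  obtain ⟨n, hn⟩ := h
  by_cases hxy : x = y
  · subst hxy; rfl
  · exact (dep_lt_of_lt n x y hn hxy).le

lemma dep_lt_of_lt' {x y : T.V} (h : T.lt x y) : T.dep y < T.dep x := by
  obtain ⟨⟨n, hn⟩, hne⟩ := h
  exact dep_lt_of_lt n x y hn hne

lemma mu_root_iff {y : T.V} (h : y ≠ T.root) : T.lt y (T.parent y) :=
  ⟨le_parent y, fun hh => parent_ne h hh.symm⟩

end PPTree

noncomputable def tauS (S : PPTree) (v : S.V) : ℝ := -(S.dep v : ℝ)

noncomputable def tauT (T S : PPTree) (μ : T.V → S.VE) (x : T.V) : ℝ :=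
  Sum.elim (fun v => -(S.dep v : ℝ))
    (fun e => -(S.dep e.1 : ℝ) + 1 / ((T.dep x : ℝ) + 1)) (μ x)

/-- Every HGT-free reconciliation is time-consistent: if
`(T,S,μ)` is a reconciliation in which `μ(x)` and `μ(y)` are `⪯_S`-comparable
for every edge `xy ∈ E(T)`, then there exist time maps `τ_T` and `τ_S` such
that `(T,S,μ,τ_T,τ_S)` is a relaxed scenario. -/
theorem HGTfree_recon_time_consistent
    (T S : PPTree) (μ : T.V → S.VE)
    (hrec : IsRecon T S μ) (hfree : IsHGTFree T S μ) :
    ∃ (τT : T.V → ℝ) (τS : S.V → ℝ), IsRelaxedScenario T S μ τT τS := by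
  classical
  have hne_root : ∀ (x : T.V) (e : S.Edge), μ x = Sum.inr e → x ≠ T.root := by
    intro x e h hx
    have := (hrec.R0 x).2 hx
    rw [h] at this
    exact Sum.inr_ne_inl this
  have hstep : ∀ z : T.V, z ≠ T.root → S.leVE (μ z) (μ (T.parent z)) := by
    intro z hz
    have hlt : T.lt z (T.parent z) := PPTree.mu_root_iff hz
    have h3 := hrec.R3 (T.parent z) z hlt
    rcases hfree z hz with h | h
    · by_cases heq : μ (T.parent z) = μ z
      · rw [heq]; exact PPTree.leVE_refl _
      · exact absurd ⟨h, heq⟩ h3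
    · exact h
  have hmono : ∀ n : ℕ, ∀ y x : T.V, T.parent^[n] y = x → y ≠ x →
      S.leVE (μ y) (μ x) := by
    intro n
    induction n with
    | zero => intro y x h hne; exact absurd h hne
    | succ k ih =>
      intro y x h hne
      have hy : y ≠ T.root := by
        rintro rfl
        rw [Function.iterate_fixed T.parent_root] at h
        exact hne h
      rw [Function.iterate_succ_apply] at h
      by_cases hpx : T.parent y = x
      · rw [← hpx]; exact hstep y hy
      · exact PPTree.leVE_trans (hstep y hy) (ih (T.parent y) x h hpx)
  have frac_pos : ∀ x : T.V, (0:ℝ) < 1 / ((T.dep x : ℝ) + 1) := by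
    intro x; positivity
  have frac_le : ∀ x : T.V, x ≠ T.root → 1 / ((T.dep x : ℝ) + 1) ≤ 1/2 := by
    intro x hx
    have h1 : 1 ≤ T.dep x := PPTree.dep_pos hx
    have h2 : (2:ℝ) ≤ (T.dep x : ℝ) + 1 := by
      have : (1:ℝ) ≤ (T.dep x : ℝ) := by exact_mod_cast h1
      linarith
    exact one_div_le_one_div_of_le (by norm_num) h2
  have hkey : ∀ y x : T.V, T.lt y x → tauT T S μ y < tauT T S μ x := by
    intro y x hlt
    obtain ⟨⟨n, hn⟩, hne⟩ := hlt
    have hle := hmono n y x hn hne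
    rcases hy : μ y with v | e <;> rcases hx : μ x with u | f <;>
      rw [hy, hx] at hle
    · -- both vertices
      have hne' : u ≠ v := by
        have h2 := hrec.R2 x y ⟨⟨n, hn⟩, hne⟩ ⟨u, hx⟩ ⟨v, hy⟩
        intro h; apply h2; rw [hx, hy, h]
      have hd : S.dep u < S.dep v :=
        PPTree.dep_lt_of_lt' ⟨hle, fun h => hne' h.symm⟩
      simp only [tauT, hy, hx, Sum.elim_inl]
      have : (S.dep u : ℝ) < (S.dep v : ℝ) := by exact_mod_cast hd
      linarith
    · -- vertex, edge
      have hd : S.dep f.1 ≤ S.dep v := PPTree.dep_le_of_le hle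
      have hd' : (S.dep f.1 : ℝ) ≤ (S.dep v : ℝ) := by exact_mod_cast hd
      simp only [tauT, hy, hx, Sum.elim_inl, Sum.elim_inr]
      have := frac_pos x
      linarith
    · -- edge, vertex
      have hd : S.dep u ≤ S.dep (S.parent e.1) := PPTree.dep_le_of_le hle
      have hdp : S.dep e.1 = S.dep (S.parent e.1) + 1 := PPTree.dep_parent e.2
      have hd' : S.dep u + 1 ≤ S.dep e.1 := by omega
      have hd'' : (S.dep u : ℝ) + 1 ≤ (S.dep e.1 : ℝ) := by exact_mod_cast hd'
      have hfy := frac_le y (hne_root y e hy)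
      simp only [tauT, hy, hx, Sum.elim_inl, Sum.elim_inr]
      linarith
    · -- both edges
      by_cases hef : e = f
      · subst hef
        have hd : T.dep x < T.dep y := PPTree.dep_lt_of_lt' ⟨⟨n, hn⟩, hne⟩
        have : ((T.dep x : ℝ)) + 1 < ((T.dep y : ℝ)) + 1 := by
          have : (T.dep x : ℝ) < (T.dep y : ℝ) := by exact_mod_cast hd
          linarith
        have hfr : 1 / ((T.dep y : ℝ) + 1) < 1 / ((T.dep x : ℝ) + 1) :=
          one_div_lt_one_div_of_lt (by positivity) this
        simp only [tauT, hy, hx, Sum.elim_inr]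
        linarith
      · have hne1 : e.1 ≠ f.1 := fun h => hef (Subtype.ext h)
        have hd : S.dep f.1 < S.dep e.1 := PPTree.dep_lt_of_lt' ⟨hle, hne1⟩
        have hd' : (S.dep f.1 : ℝ) + 1 ≤ (S.dep e.1 : ℝ) := by
          exact_mod_cast hd
        have hfy := frac_le y (hne_root y e hy)
        have := frac_pos x
        simp only [tauT, hy, hx, Sum.elim_inr]
        linarith
  refine ⟨tauT T S μ, tauS S, ?_, ?_, hrec.R0, hrec.R1, ?_, ?_⟩
  · intro x y h; exact hkey x y h
  · intro x y h
    have hd := PPTree.dep_lt_of_lt' h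
    have : (S.dep y : ℝ) < (S.dep x : ℝ) := by exact_mod_cast hd
    simp only [tauS]; linarith
  · intro x v h; simp [tauS, tauT, h]
  · intro x e h
    have hx := hne_root x e h
    have hdp : S.dep e.1 = S.dep (S.parent e.1) + 1 := PPTree.dep_parent e.2
    have hdp' : (S.dep e.1 : ℝ) = (S.dep (S.parent e.1) : ℝ) + 1 := by
      exact_mod_cast hdp
    have h1 := frac_pos x
    have h2 := frac_le x hx
    constructor
    · simp only [tauS, tauT, h, Sum.elim_inr]; linarith
    · simp only [tauS, tauT, h, Sum.elim_inr]; linarith
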